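/- Let n be even and let L₁, L₂ be cyclic Latin squares of order n generated by first columns f₁, f₂ : Z_n → Z_n respectively (so L_k(r,c) = f_k(r) + c mod n). Then L₁ and L₂ are nearly orthogonal if and only if the multiset of differences { f₁(r) − f₂(r) mod n : r ∈ Z_n } contains each nonzero element of Z_n except n/2 exactly once, contains n/2 exactly twice, and does not contain 0. -/

import Mathlib

/-- An `n × n` array on `ZMod n` is a Latin square if every row and column is a bijection. -/
def IsLatinSq (n : ℕ) (L : ZMod n → ZMod n → ZMod n) : Prop :=
  (∀ r, Function.Bijective fun c => L r c) ∧ (∀ c, Function.Bijective fun r => L r c)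

/-- A Latin square is cyclic if `(r,c,e) ∈ L` implies `(r,c+1,e+1) ∈ L`. -/
def IsCyclicSq (n : ℕ) (L : ZMod n → ZMod n → ZMod n) : Prop :=
  ∀ r c, L r (c + 1) = L r c + 1

/-- Number of cells where the superimposition of `L₁, L₂` shows the ordered pair `(l, l')`. -/
def pairCount (n : ℕ) [NeZero n] (L₁ L₂ : ZMod n → ZMod n → ZMod n) (l l' : ZMod n) : ℕ :=
  (Finset.univ.filter fun p : ZMod n × ZMod n => L₁ p.1 p.2 = l ∧ L₂ p.1 p.2 = l').card

/-- Near orthogonality: `(l,l)` never occurs, `(l, l+n/2)` occurs twice, all other pairs once. -/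
def NearlyOrth (n : ℕ) [NeZero n] (L₁ L₂ : ZMod n → ZMod n → ZMod n) : Prop :=
  ∀ l l' : ZMod n,
    (l' = l → pairCount n L₁ L₂ l l' = 0) ∧
    (l' = l + ((n / 2 : ℕ) : ZMod n) → l' ≠ l → pairCount n L₁ L₂ l l' = 2) ∧
    (l' ≠ l → l' ≠ l + ((n / 2 : ℕ) : ZMod n) → pairCount n L₁ L₂ l l' = 1)

lemma pairCount_eq (n : ℕ) [NeZero n] (f₁ f₂ : ZMod n → ZMod n) (l l' : ZMod n) :
    pairCount n (fun r c => f₁ r + c) (fun r c => f₂ r + c) l l' =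
    (Finset.univ.filter fun r : ZMod n => f₁ r - f₂ r = l - l').card := by
  unfold pairCount
  apply Finset.card_nbij' (fun p => p.1) (fun r => (r, l - f₁ r))
  · intro p hp
    simp only [Finset.mem_coe, Finset.mem_filter, Finset.mem_univ, true_and] at hp ⊢
    obtain ⟨h1, h2⟩ := hp
    have : p.2 = l - f₁ p.1 := by linear_combination h1
    linear_combination h1 - h2
  · intro r hr
    simp only [Finset.mem_coe, Finset.mem_filter, Finset.mem_univ, true_and] at hr ⊢
    constructor
    · ring
    · linear_combination -hr
  · intro p hp
    simp only [Finset.mem_coe, Finset.mem_filter, Finset.mem_univ, true_and] at hp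
    obtain ⟨r, c⟩ := p
    simp only [Prod.mk.injEq, true_and]
    linear_combination -hp.1
  · intro r hr; rfl


/-- Two cyclic Latin squares generated by first columns `f₁, f₂` are nearly orthogonal iff
the multiset of differences `f₁(r) - f₂(r)` omits `0`, contains `n/2` exactly twice, and
contains every other residue exactly once. -/
theorem cyclic_nearlyOrth_iff_differences (n : ℕ) [NeZero n] (hn : Even n)
    (f₁ f₂ : ZMod n → ZMod n) (hf₁ : Function.Bijective f₁) (hf₂ : Function.Bijective f₂) :
    NearlyOrth n (fun r c => f₁ r + c) (fun r c => f₂ r + c) ↔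
      ((Finset.univ.filter fun r : ZMod n => f₁ r - f₂ r = 0).card = 0 ∧
       (Finset.univ.filter fun r : ZMod n => f₁ r - f₂ r = ((n / 2 : ℕ) : ZMod n)).card = 2 ∧
       ∀ d : ZMod n, d ≠ 0 → d ≠ ((n / 2 : ℕ) : ZMod n) →
         (Finset.univ.filter fun r : ZMod n => f₁ r - f₂ r = d).card = 1) := by
  obtain ⟨k, hk⟩ := hn
  have hn2 : n / 2 = k := by omega
  have hkpos : 0 < k := by
    have := NeZero.pos n; omega
  have hh : ((n / 2 : ℕ) : ZMod n) + ((n / 2 : ℕ) : ZMod n) = 0 := by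
    rw [hn2, ← Nat.cast_add, ← hk, ZMod.natCast_self]
  have hne : ((n / 2 : ℕ) : ZMod n) ≠ 0 := by
    rw [hn2]
    intro h
    rw [ZMod.natCast_eq_zero_iff] at h
    have := Nat.le_of_dvd hkpos h
    omega
  constructor
  · intro h
    refine ⟨?_, ?_, ?_⟩
    · have := (h 0 0).1 rfl
      rwa [pairCount_eq, sub_zero] at this
    · have := (h 0 ((n / 2 : ℕ) : ZMod n)).2.1 (by rw [zero_add]) (by simpa using hne)
      rw [pairCount_eq] at this
      rw [show (0 : ZMod n) - ((n / 2 : ℕ) : ZMod n) = ((n / 2 : ℕ) : ZMod n) by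
        linear_combination -hh] at this
      exact this
    · intro d hd0 hdh
      have := (h 0 (-d)).2.2 (by simpa using hd0)
        (by rw [zero_add]; intro hc; exact hdh (by linear_combination -hc - hh))
      rwa [pairCount_eq, zero_sub, neg_neg] at this
  · rintro ⟨h0, h2, h1⟩ l l'
    refine ⟨?_, ?_, ?_⟩
    · rintro rfl
      rw [pairCount_eq, sub_self]; exact h0
    · rintro rfl hne'
      rw [pairCount_eq, show l - (l + ((n / 2 : ℕ) : ZMod n)) = ((n / 2 : ℕ) : ZMod n) by
        linear_combination -hh]
      exact h2
    · intro hne1 hne2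
      rw [pairCount_eq]
      exact h1 _ (fun hc => hne1 (by linear_combination -hc))
        (fun hc => hne2 (by linear_combination -hc - hh))
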